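/- Let a_1, ..., a_n be distinct real numbers with a_i > 1 for each i, and let U > 0. If a linear combination Σ_{i=1}^n c_i (sqrt(1 + a_i u) - 1) vanishes identically for all u in the open interval (0, U), then all c_i = 0. -/

import Mathlib

open Real Filter

private lemma iter_const_zero : ∀ (k : ℕ) (b x : ℝ),
    iteratedDeriv (k + 1) (fun _ : ℝ => b) x = 0 := by
  intro k
  induction k with
  | zero => intro b x; simp [iteratedDeriv_one]
  | succ k ih =>
    intro b x
    rw [iteratedDeriv_succ']
    have : (deriv fun _ : ℝ => b) = fun _ : ℝ => (0 : ℝ) := by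
      funext y; simp
    rw [this]
    exact ih 0 x

private lemma key_deriv {n : ℕ} (a : Fin n → ℝ) :
    ∀ (k : ℕ) (C : Fin n → ℝ) (r u0 : ℝ), (∀ i, 0 < 1 + a i * u0) →
    iteratedDeriv k (fun u => ∑ i, C i * (1 + a i * u) ^ r) u0
      = ∑ i, C i * (∏ j ∈ Finset.range k, (r - j)) * a i ^ k
          * (1 + a i * u0) ^ (r - k) := by
  intro k
  induction k with
  | zero =>
    intro C r u0 hpos
    simp [iteratedDeriv_zero]
  | succ k ih =>
    intro C r u0 hpos
    rw [iteratedDeriv_succ']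
    set S : Set ℝ := ⋂ i, {u : ℝ | 0 < 1 + a i * u} with hS
    have hSopen : IsOpen S := by
      apply isOpen_iInter_of_finite
      intro i
      have : {u : ℝ | 0 < 1 + a i * u} = (fun u => 1 + a i * u) ⁻¹' Set.Ioi 0 := rfl
      rw [this]
      exact (continuous_const.add (continuous_const.mul continuous_id)).isOpen_preimage _ isOpen_Ioi
    have hu0S : u0 ∈ S := Set.mem_iInter.mpr fun i => hpos i
    have hnhds : S ∈ nhds u0 := hSopen.mem_nhds hu0S
    have hderiv : ∀ u ∈ S, deriv (fun u => ∑ i, C i * (1 + a i * u) ^ r) u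
        = ∑ i, (C i * (a i * r)) * (1 + a i * u) ^ (r - 1) := by
      intro u hu
      have hu' : ∀ i, 0 < 1 + a i * u := fun i => Set.mem_iInter.mp hu i
      have H : HasDerivAt (fun u => ∑ i, C i * (1 + a i * u) ^ r)
          (∑ i, (C i * (a i * r)) * (1 + a i * u) ^ (r - 1)) u := by
        apply HasDerivAt.fun_sum
        intro i _
        have h1 : HasDerivAt (fun u : ℝ => 1 + a i * u) (a i) u := by
          simpa using ((hasDerivAt_id u).const_mul (a i)).const_add 1
        have h2 : HasDerivAt (fun x : ℝ => x ^ r) (r * (1 + a i * u) ^ (r - 1))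
            (1 + a i * u) := Real.hasDerivAt_rpow_const (Or.inl (ne_of_gt (hu' i)))
        have h3 := (h2.comp u h1).const_mul (C i)
        convert h3 using 1
        · rfl
        show C i * (a i * r) * (1 + a i * u) ^ (r - 1) = C i * (r * (1 + a i * u) ^ (r - 1) * a i)
        ring
        rfl
      exact H.deriv
    have hev : deriv (fun u => ∑ i, C i * (1 + a i * u) ^ r)
        =ᶠ[nhds u0] fun u => ∑ i, (C i * (a i * r)) * (1 + a i * u) ^ (r - 1) :=
      eventually_of_mem hnhds hderiv
    rw [hev.iteratedDeriv_eq k]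
    rw [ih (fun i => C i * (a i * r)) (r - 1) u0 hpos]
    apply Finset.sum_congr rfl
    intro i _
    have hprod : (∏ j ∈ Finset.range (k + 1), (r - j))
        = r * ∏ j ∈ Finset.range k, (r - 1 - j) := by
      rw [Finset.prod_range_succ', Nat.cast_zero, sub_zero, mul_comm]
      refine congrArg (fun t => r * t) ?_
      apply Finset.prod_congr rfl
      intro j _
      push_cast
      ring
    have hexp : r - 1 - (k : ℝ) = r - ((k : ℕ) + 1 : ℕ) := by push_cast; ring
    rw [hprod, ← hexp]
    ring

/-- Linear independence of `u ↦ √(1 + a u) - 1` for distinct parameters `a > 1` on `(0, U)`. -/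
theorem sqrt_one_add_mul_linearIndependent {n : ℕ} (a c : Fin n → ℝ)
    (ha : ∀ i, 1 < a i) (ha_inj : Function.Injective a) (U : ℝ) (hU : 0 < U)
    (h : ∀ u ∈ Set.Ioo (0 : ℝ) U, ∑ i, c i * (Real.sqrt (1 + a i * u) - 1) = 0) :
    ∀ i, c i = 0 := by
  set u0 : ℝ := U / 2 with hu0def
  have hu0 : 0 < u0 := by positivity
  have hu0U : u0 < U := by linarith
  have hpos : ∀ i, 0 < 1 + a i * u0 := by
    intro i
    have := ha i
    nlinarith
  set F : ℝ → ℝ := fun u => ∑ i, c i * (1 + a i * u) ^ ((1 : ℝ) / 2) with hF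
  -- F is eventually constant near u0
  have hFev : F =ᶠ[nhds u0] fun _ => ∑ i, c i := by
    apply eventually_of_mem (isOpen_Ioo.mem_nhds ⟨hu0, hu0U⟩)
    intro u hu
    have hupos : ∀ i, (0:ℝ) ≤ 1 + a i * u := by
      intro i
      have := ha i
      nlinarith [hu.1]
    have : F u = ∑ i, c i * (Real.sqrt (1 + a i * u) - 1) + ∑ i, c i := by
      rw [← Finset.sum_add_distrib]
      apply Finset.sum_congr rfl
      intro i _
      rw [Real.sqrt_eq_rpow]
      ring
    rw [this, h u hu, zero_add]
  -- iterated derivatives of F vanish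
  have hvanish : ∀ k : ℕ, ∑ i, c i * (∏ j ∈ Finset.range (k+1), ((1:ℝ)/2 - j))
      * a i ^ (k+1) * (1 + a i * u0) ^ ((1:ℝ)/2 - (k+1 : ℕ)) = 0 := by
    intro k
    have h1 := key_deriv a (k+1) c ((1:ℝ)/2) u0 hpos
    have h2 : iteratedDeriv (k+1) F u0 = 0 := by
      rw [hFev.iteratedDeriv_eq (k+1)]
      exact iter_const_zero k _ u0
    rw [← h1, h2]
  -- the product is nonzero
  have hprod_ne : ∀ k : ℕ, (∏ j ∈ Finset.range (k+1), ((1:ℝ)/2 - j)) ≠ 0 := by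
    intro k
    apply Finset.prod_ne_zero_iff.mpr
    intro j _
    rcases j with _ | j
    · norm_num
    · push_cast
      intro hcon
      nlinarith [Nat.cast_nonneg (α := ℝ) j]
  -- set up Vandermonde
  set x : Fin n → ℝ := fun i => a i / (1 + a i * u0) with hx
  have hxinj : Function.Injective x := by
    intro i j hij
    apply ha_inj
    have hi := hpos i
    have hj := hpos j
    have : a i * (1 + a j * u0) = a j * (1 + a i * u0) := by
      simp only [hx, div_eq_div_iff (ne_of_gt hi) (ne_of_gt hj)] at hij
      linarith [hij]
    nlinarith
  set v : Fin n → ℝ := fun i => c i * a i * (1 + a i * u0) ^ ((1:ℝ)/2 - 1) with hv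
  have hveq : ∀ j : Fin n, ∑ i, v i * x i ^ (j : ℕ) = 0 := by
    intro j
    have h1 := hvanish (j : ℕ)
    have h2 : ∀ i, c i * (∏ l ∈ Finset.range ((j:ℕ)+1), ((1:ℝ)/2 - l))
        * a i ^ ((j:ℕ)+1) * (1 + a i * u0) ^ ((1:ℝ)/2 - ((j:ℕ)+1 : ℕ))
        = (∏ l ∈ Finset.range ((j:ℕ)+1), ((1:ℝ)/2 - l)) * (v i * x i ^ (j:ℕ)) := by
      intro i
      have hPi := hpos i
      have hPne : (1 + a i * u0) ≠ 0 := ne_of_gt hPi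
      have e1 : (1 + a i * u0) ^ ((1:ℝ)/2 - ((j:ℕ)+1 : ℕ))
          = (1 + a i * u0) ^ ((1:ℝ)/2 - 1) * ((1 + a i * u0) ^ (j:ℕ))⁻¹ := by
        rw [← Real.rpow_natCast (1 + a i * u0) (j:ℕ), ← Real.rpow_neg (le_of_lt hPi),
          ← Real.rpow_add hPi]
        congr 1
        push_cast
        ring
      rw [e1, hv, hx]
      rw [div_pow]
      field_simp
      ring
    have h3 : (∏ l ∈ Finset.range ((j:ℕ)+1), ((1:ℝ)/2 - l)) *
        (∑ i, v i * x i ^ (j:ℕ)) = 0 := by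
      rw [Finset.mul_sum]
      calc ∑ i, (∏ l ∈ Finset.range ((j:ℕ)+1), ((1:ℝ)/2 - l)) * (v i * x i ^ (j:ℕ))
          = ∑ i, c i * (∏ l ∈ Finset.range ((j:ℕ)+1), ((1:ℝ)/2 - l))
            * a i ^ ((j:ℕ)+1) * (1 + a i * u0) ^ ((1:ℝ)/2 - ((j:ℕ)+1 : ℕ)) :=
            Finset.sum_congr rfl fun i _ => (h2 i).symm
        _ = 0 := h1
    exact (mul_eq_zero.mp h3).resolve_left (hprod_ne _)
  have hv0 : v = 0 := Matrix.eq_zero_of_forall_pow_sum_mul_pow_eq_zero hxinj hveq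
  intro i
  have : v i = 0 := by rw [hv0]; rfl
  rw [hv] at this
  have ha_ne : a i ≠ 0 := by have := ha i; linarith
  have hr_ne : (1 + a i * u0) ^ ((1:ℝ)/2 - 1) ≠ 0 :=
    ne_of_gt (Real.rpow_pos_of_pos (hpos i) _)
  rcases mul_eq_zero.mp this with h' | h'
  · rcases mul_eq_zero.mp h' with h'' | h''
    · exact h''
    · exact absurd h'' ha_ne
  · exact absurd h' hr_ne
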